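/- Let Y be a finite-dimensional real inner product space and (Ω, ℱ, P) a probability space. Let H : Y →L[ℝ] Y be self-adjoint with μ‖v‖² ≤ ⟨Hv, v⟩ ≤ L‖v‖² for all v (0 < μ ≤ L), let 0 < β ≤ 1/L, let c ∈ Y, and let u* ∈ Y satisfy H(u*) = c. Let Ĥ : Ω → (Y →L[ℝ] Y) and ĉ : Ω → Y be integrable random elements with 𝔼[Ĥ] = H, 𝔼[ĉ] = c, 𝔼[‖Ĥ − H‖_op²] ≤ S₂, and 𝔼[‖ĉ − c‖²] ≤ S_f, and assume β S₂ ≤ μ/8. Then for every u ∈ Y: 𝔼[‖u − β(Ĥ(u) − ĉ) − u*‖²] ≤ (1 − βμ/2)‖u − u*‖² + 2β² S_f + 4β² S₂ ‖u*‖². -/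

import Mathlib

open MeasureTheory
open scoped RealInnerProductSpace

set_option maxHeartbeats 1600000 in
/-- One-step stochastic iteration bound for the linear-system variable in the proof of
Lemma B.2 of the paper. -/
theorem stmt_18
    {Y : Type*} [NormedAddCommGroup Y] [InnerProductSpace ℝ Y] [FiniteDimensional ℝ Y]
    {Ω : Type*} [MeasurableSpace Ω] (P : Measure Ω) [IsProbabilityMeasure P]
    (H : Y →L[ℝ] Y) (μ L β S2 Sf : ℝ) (hμ : 0 < μ) (hμL : μ ≤ L)
    (hsym : ∀ v w : Y, ⟪H v, w⟫ = ⟪v, H w⟫)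
    (hlb : ∀ v : Y, μ * ‖v‖ ^ 2 ≤ ⟪H v, v⟫)
    (hub : ∀ v : Y, ⟪H v, v⟫ ≤ L * ‖v‖ ^ 2)
    (hβ : 0 < β) (hβle : β ≤ 1 / L)
    (c ustar : Y) (hustar : H ustar = c)
    (Hhat : Ω → Y →L[ℝ] Y) (chat : Ω → Y)
    (hHint : Integrable Hhat P) (hcint : Integrable chat P)
    (hHmean : ∫ ω, Hhat ω ∂P = H) (hcmean : ∫ ω, chat ω ∂P = c)
    (hHvarint : Integrable (fun ω => ‖Hhat ω - H‖ ^ 2) P)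
    (hHvar : ∫ ω, ‖Hhat ω - H‖ ^ 2 ∂P ≤ S2)
    (hcvarint : Integrable (fun ω => ‖chat ω - c‖ ^ 2) P)
    (hcvar : ∫ ω, ‖chat ω - c‖ ^ 2 ∂P ≤ Sf)
    (hβS : β * S2 ≤ μ / 8) :
    ∀ u : Y,
      ∫ ω, ‖u - β • (Hhat ω u - chat ω) - ustar‖ ^ 2 ∂P
        ≤ (1 - β * μ / 2) * ‖u - ustar‖ ^ 2 + 2 * β ^ 2 * Sf + 4 * β ^ 2 * S2 * ‖ustar‖ ^ 2 := by
  intro u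
  have hL : 0 < L := lt_of_lt_of_le hμ hμL
  have hβL : β * L ≤ 1 := by
    rw [le_div_iff₀ hL] at hβle; linarith
  set d : Y := u - ustar with hd
  set a : Y := d - β • H d with ha
  set n : Ω → Y := fun ω => β • ((Hhat ω u - H u) - (chat ω - c)) with hn
  -- pointwise identity
  have hpt : ∀ ω, u - β • (Hhat ω u - chat ω) - ustar = a - n ω := by
    intro ω
    have hHd : H d = H u - c := by rw [map_sub, hustar]
    simp only [hn, ha, hd, hHd, map_sub, hustar]
    module
  -- integrability of n
  have iH1 : Integrable (fun ω => Hhat ω u - H u) P :=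
    (hHint.apply_continuousLinearMap u).sub (integrable_const (H u))
  have ic1 : Integrable (fun ω => chat ω - c) P := hcint.sub (integrable_const c)
  have hn_int : Integrable n P := (iH1.sub ic1).smul β
  -- mean zero
  have hn0 : ∫ ω, n ω ∂P = 0 := by
    have h1 : ∫ ω, Hhat ω u ∂P = H u := by
      rw [← ContinuousLinearMap.integral_apply hHint, hHmean]
    have h2 : ∫ ω, (Hhat ω u - H u) ∂P = 0 := by
      rw [integral_sub (hHint.apply_continuousLinearMap u) (integrable_const (H u)),
        integral_const, h1]
      simp
    have h3 : ∫ ω, (chat ω - c) ∂P = 0 := by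
      rw [integral_sub hcint (integrable_const c), integral_const, hcmean]
      simp
    simp only [hn]
    rw [integral_smul, integral_sub iH1 ic1, h2, h3, sub_zero, smul_zero]
  -- pointwise bound on ‖n‖²
  have hnb : ∀ ω, ‖n ω‖ ^ 2 ≤ 2 * β ^ 2 * (‖Hhat ω - H‖ ^ 2 * ‖u‖ ^ 2 + ‖chat ω - c‖ ^ 2) := by
    intro ω
    have h1 : ‖Hhat ω u - H u‖ ≤ ‖Hhat ω - H‖ * ‖u‖ := by
      have := (Hhat ω - H).le_opNorm u
      simpa using this
    have h2 : ‖n ω‖ ≤ β * (‖Hhat ω u - H u‖ + ‖chat ω - c‖) := by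
      simp only [hn, norm_smul, Real.norm_eq_abs, abs_of_pos hβ]
      have := norm_sub_le (Hhat ω u - H u) (chat ω - c)
      nlinarith
    have h3 : 0 ≤ ‖n ω‖ := norm_nonneg _
    nlinarith [norm_nonneg (Hhat ω u - H u), norm_nonneg (chat ω - c),
      norm_nonneg (Hhat ω - H), norm_nonneg u,
      sq_nonneg (‖Hhat ω u - H u‖ - ‖chat ω - c‖), sq_nonneg β,
      mul_le_mul_of_nonneg_left h1 (norm_nonneg (Hhat ω u - H u)),
      mul_le_mul_of_nonneg_left h1 (mul_nonneg (norm_nonneg (Hhat ω - H)) (norm_nonneg u))]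
  -- integrability of ‖n‖²
  have iHu : Integrable (fun ω => ‖Hhat ω - H‖ ^ 2 * ‖u‖ ^ 2) P := hHvarint.mul_const _
  have hg_int : Integrable (fun ω => 2 * β ^ 2 * (‖Hhat ω - H‖ ^ 2 * ‖u‖ ^ 2 + ‖chat ω - c‖ ^ 2)) P :=
    (iHu.add hcvarint).const_mul _
  have hn2_int : Integrable (fun ω => ‖n ω‖ ^ 2) P := by
    refine Integrable.mono' hg_int
      ((continuous_pow 2).comp_aestronglyMeasurable hn_int.aestronglyMeasurable.norm) ?_
    filter_upwards with ω
    rw [Real.norm_eq_abs, abs_of_nonneg (sq_nonneg _)]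
    exact hnb ω
  -- second moment bound
  have hS2 : 0 ≤ S2 := le_trans (integral_nonneg fun ω => sq_nonneg _) hHvar
  have hSf : 0 ≤ Sf := le_trans (integral_nonneg fun ω => sq_nonneg _) hcvar
  have hn2 : ∫ ω, ‖n ω‖ ^ 2 ∂P ≤ 2 * β ^ 2 * (S2 * ‖u‖ ^ 2 + Sf) := by
    have h1 : ∫ ω, ‖n ω‖ ^ 2 ∂P
        ≤ ∫ ω, 2 * β ^ 2 * (‖Hhat ω - H‖ ^ 2 * ‖u‖ ^ 2 + ‖chat ω - c‖ ^ 2) ∂P :=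
      integral_mono hn2_int hg_int hnb
    rw [integral_const_mul, integral_add iHu hcvarint, integral_mul_const] at h1
    have h2 : (∫ ω, ‖Hhat ω - H‖ ^ 2 ∂P) * ‖u‖ ^ 2 ≤ S2 * ‖u‖ ^ 2 :=
      mul_le_mul_of_nonneg_right hHvar (sq_nonneg _)
    have h3 := mul_le_mul_of_nonneg_left (add_le_add h2 hcvar)
      (by positivity : (0:ℝ) ≤ 2 * β ^ 2)
    linarith
  -- main integral decomposition
  have key : ∫ ω, ‖u - β • (Hhat ω u - chat ω) - ustar‖ ^ 2 ∂P
      = ‖a‖ ^ 2 + ∫ ω, ‖n ω‖ ^ 2 ∂P := by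
    have e1 : ∀ ω, ‖u - β • (Hhat ω u - chat ω) - ustar‖ ^ 2
        = ‖a‖ ^ 2 - 2 * ⟪a, n ω⟫ + ‖n ω‖ ^ 2 := by
      intro ω
      rw [hpt ω, norm_sub_sq_real a (n ω)]
    have ib : Integrable (fun ω => 2 * ⟪a, n ω⟫) P := (hn_int.const_inner a).const_mul 2
    have ia : Integrable (fun ω => ‖a‖ ^ 2 - 2 * ⟪a, n ω⟫) P := (integrable_const _).sub ib
    rw [integral_congr_ae (Filter.Eventually.of_forall e1),
      integral_add ia hn2_int, integral_sub (integrable_const _) ib,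
      integral_const, integral_const_mul, integral_inner hn_int, hn0]
    simp
  -- Cauchy–Schwarz-type bound: ‖H d‖² ≤ L ⟪H d, d⟫
  have hp0 : 0 ≤ ⟪H d, d⟫ := le_trans (mul_nonneg hμ.le (sq_nonneg _)) (hlb d)
  have hq : ‖H d‖ ^ 2 ≤ L * ⟪H d, d⟫ := by
    by_cases h0 : H d = 0
    · rw [h0]; simp
    · have hny : 0 < ‖H d‖ ^ 2 := by
        have := norm_pos_iff.mpr h0
        positivity
      have hr : 0 < ⟪H (H d), H d⟫ :=
        lt_of_lt_of_le (by positivity) (hlb (H d))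
      set t : ℝ := ‖H d‖ ^ 2 / ⟪H (H d), H d⟫ with ht
      have e1 : ⟪H (H d), d⟫ = ‖H d‖ ^ 2 := by
        rw [hsym, real_inner_self_eq_norm_sq]
      have e2 : ⟪H d, H d⟫ = ‖H d‖ ^ 2 := real_inner_self_eq_norm_sq _
      have expand : ⟪H (d - t • H d), d - t • H d⟫
          = ⟪H d, d⟫ - 2 * t * ‖H d‖ ^ 2 + t ^ 2 * ⟪H (H d), H d⟫ := by
        simp only [map_sub, _root_.map_smul, inner_sub_left, inner_sub_right,
          real_inner_smul_left, real_inner_smul_right, e1, e2]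
        ring
      have hpos : 0 ≤ ⟪H (d - t • H d), d - t • H d⟫ :=
        le_trans (mul_nonneg hμ.le (sq_nonneg _)) (hlb _)
      rw [expand] at hpos
      have htv : t * ⟪H (H d), H d⟫ = ‖H d‖ ^ 2 := by
        rw [ht, div_mul_cancel₀ _ hr.ne']
      have ht2 : t ^ 2 * ⟪H (H d), H d⟫ = t * ‖H d‖ ^ 2 := by
        rw [sq, mul_assoc, htv]
      have h5 : t * ‖H d‖ ^ 2 ≤ ⟪H d, d⟫ := by linarith
      have h4 : ‖H d‖ ^ 2 * ‖H d‖ ^ 2 ≤ ⟪H d, d⟫ * ⟪H (H d), H d⟫ := by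
        have := mul_le_mul_of_nonneg_right h5 hr.le
        calc ‖H d‖ ^ 2 * ‖H d‖ ^ 2 = t * ‖H d‖ ^ 2 * ⟪H (H d), H d⟫ := by
              rw [mul_right_comm, htv]
          _ ≤ ⟪H d, d⟫ * ⟪H (H d), H d⟫ := this
      have h6 : ⟪H d, d⟫ * ⟪H (H d), H d⟫ ≤ (L * ⟪H d, d⟫) * ‖H d‖ ^ 2 := by
        calc ⟪H d, d⟫ * ⟪H (H d), H d⟫ ≤ ⟪H d, d⟫ * (L * ‖H d‖ ^ 2) :=
              mul_le_mul_of_nonneg_left (hub (H d)) hp0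
          _ = (L * ⟪H d, d⟫) * ‖H d‖ ^ 2 := by ring
      exact le_of_mul_le_mul_right (le_trans h4 h6) hny
  -- contraction bound
  have hcontr : ‖a‖ ^ 2 ≤ (1 - β * μ) * ‖d‖ ^ 2 := by
    have e : ‖a‖ ^ 2 = ‖d‖ ^ 2 - 2 * (β * ⟪H d, d⟫) + β ^ 2 * ‖H d‖ ^ 2 := by
      have e0 : ‖a‖ ^ 2 = ‖d‖ ^ 2 - 2 * ⟪d, β • H d⟫ + ‖β • H d‖ ^ 2 := by
        rw [ha]; exact norm_sub_sq_real d (β • H d)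
      rw [e0, real_inner_smul_right, real_inner_comm, norm_smul,
        Real.norm_eq_abs, abs_of_pos hβ, mul_pow]
    have hb2 : β ^ 2 * L ≤ β := by nlinarith [mul_le_mul_of_nonneg_left hβL hβ.le]
    have hc1 : β ^ 2 * ‖H d‖ ^ 2 ≤ β * ⟪H d, d⟫ := by
      calc β ^ 2 * ‖H d‖ ^ 2 ≤ β ^ 2 * (L * ⟪H d, d⟫) :=
            mul_le_mul_of_nonneg_left hq (sq_nonneg β)
        _ = (β ^ 2 * L) * ⟪H d, d⟫ := by ring
        _ ≤ β * ⟪H d, d⟫ := mul_le_mul_of_nonneg_right hb2 hp0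
    have hc2 : β * (μ * ‖d‖ ^ 2) ≤ β * ⟪H d, d⟫ := mul_le_mul_of_nonneg_left (hlb d) hβ.le
    rw [e]
    nlinarith
  -- combine
  have hu2 : ‖u‖ ^ 2 ≤ 2 * ‖d‖ ^ 2 + 2 * ‖ustar‖ ^ 2 := by
    have h1 : ‖u‖ ≤ ‖d‖ + ‖ustar‖ := by
      have h2 : u = d + ustar := by rw [hd]; abel
      rw [h2]; exact norm_add_le _ _
    nlinarith [norm_nonneg u, norm_nonneg d, norm_nonneg ustar, sq_nonneg (‖d‖ - ‖ustar‖)]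
  have hA : ∫ ω, ‖n ω‖ ^ 2 ∂P
      ≤ 2 * β ^ 2 * (S2 * (2 * ‖d‖ ^ 2 + 2 * ‖ustar‖ ^ 2) + Sf) := by
    refine le_trans hn2 (mul_le_mul_of_nonneg_left (add_le_add ?_ (le_refl Sf))
      (by positivity : (0:ℝ) ≤ 2 * β ^ 2))
    exact mul_le_mul_of_nonneg_left hu2 hS2
  have hβS2d : 4 * β ^ 2 * S2 * ‖d‖ ^ 2 ≤ β * μ / 2 * ‖d‖ ^ 2 := by
    nlinarith [mul_le_mul_of_nonneg_right hβS (mul_nonneg hβ.le (sq_nonneg ‖d‖))]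
  rw [key]
  nlinarith [hcontr, hA, hβS2d]
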